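/- Let G be a cocomparability graph with LDFS umbrella-free ordering σ (augmented with an isolated dummy vertex u_{n+1}), and suppose uᵢ ∈ V(G(i,j)), u_x ∈ V(G(i+1,j)), u_y ∈ V(G(i+1,x−1)), and u_x ∈ N(uᵢ). If P₁ is a normal path of G(i+1,j) ending at u_x and P₂ is a normal path of G(i+1,x−1) ending at u_y, then P = (P₁, uᵢ, P₂) is a normal path of G(i,j) ending at u_y. In particular, the vertex sets of P₁ and P₂ are disjoint and every vertex of P₂ is adjacent to uᵢ. -/

import Mathlib

def UmbrellaFree {V : Type*} [LinearOrder V] (G : SimpleGraph V) : Prop :=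
  ∀ x y z : V, x < y → y < z → G.Adj x z → G.Adj x y ∨ G.Adj y z

def LDFSOrdering {V : Type*} [LinearOrder V] (G : SimpleGraph V) : Prop :=
  ∀ a b c : V, a < b → b < c → G.Adj a c → ¬ G.Adj a b →
    ∃ d : V, a < d ∧ d < b ∧ G.Adj d b ∧ ¬ G.Adj d c

/-- A (simple) path of `G`, as a list of distinct vertices with consecutive vertices
adjacent. -/
def IsPathList {V : Type*} (G : SimpleGraph V) (P : List V) : Prop :=
  P.Nodup ∧ P.Chain' G.Adj

/-- `P = (v₁, v₂, …)` is typical (w.r.t. the ordering σ given by the linear order on `V`):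
`v₁` is the rightmost vertex of `V(P)` in σ, and `v₂` is the rightmost vertex of
`N(v₁) ∩ V(P)` in σ. -/
def TypicalPath {V : Type*} [LinearOrder V] (G : SimpleGraph V) : List V → Prop
  | [] => True
  | [_] => True
  | v1 :: v2 :: rest =>
      (∀ v ∈ v1 :: v2 :: rest, v ≤ v1) ∧ (∀ v ∈ v2 :: rest, G.Adj v1 v → v ≤ v2)

/-- The "normality from each vertex on" condition: for any two consecutive vertices
`v_{i-1}, v_i` of the list, `v_i` is the rightmost vertex of
`N(v_{i-1}) ∩ {v_i, …, v_k}` in σ. -/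
def NormalFrom {V : Type*} [LinearOrder V] (G : SimpleGraph V) : List V → Prop
  | [] => True
  | [_] => True
  | a :: b :: rest =>
      (∀ v ∈ b :: rest, G.Adj a v → v ≤ b) ∧ NormalFrom G (b :: rest)

/-- `P` is a normal path of `G` (w.r.t. σ): a typical path such that each `v_i` is the
rightmost vertex of `N(v_{i-1}) ∩ {v_i, …, v_k}` in σ. -/
def NormalPath {V : Type*} [LinearOrder V] (G : SimpleGraph V) (P : List V) : Prop :=
  IsPathList G P ∧ (∀ h : P ≠ [], ∀ v ∈ P, v ≤ P.head h) ∧ NormalFrom G P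

/-- The vertex set of `G(i,j)` (`0`-indexed), where `u_n` is the dummy isolated vertex. -/
def Gset {n : ℕ} (G : SimpleGraph (Fin (n + 1))) (i j : ℕ) : Set (Fin (n + 1)) :=
  {v | i ≤ (v : ℕ) ∧ (v : ℕ) ≤ j ∧ ∀ w : Fin (n + 1), (w : ℕ) = j + 1 → ¬ G.Adj v w}

/-- `P` is a normal path of the induced subgraph on the vertex set `S` (adjacency among
vertices of `P` in the induced subgraph coincides with adjacency in `G`). -/
def NormalPathIn {V : Type*} [LinearOrder V] (G : SimpleGraph V) (S : Set V)
    (P : List V) : Prop :=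
  (∀ v ∈ P, v ∈ S) ∧ NormalPath G P

variable {V : Type*} [LinearOrder V] {G : SimpleGraph V}

lemma nf_tail {a : V} {l : List V} (h : NormalFrom G (a :: l)) : NormalFrom G l := by
  cases l with
  | nil => trivial
  | cons b r => exact h.2

lemma nf_suffix (pre : List V) {l : List V} (h : NormalFrom G (pre ++ l)) :
    NormalFrom G l := by
  induction pre with
  | nil => exact h
  | cons a pre ih => exact ih (nf_tail h)

lemma nf_append (L M : List V) (hL : NormalFrom G L) (hM : NormalFrom G M)
    (hmid : ∀ pre (a b : V) suf, L = pre ++ a :: b :: suf → ∀ v ∈ M, G.Adj a v → v ≤ b)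
    (hlast : ∀ a, L.getLast? = some a → ∀ b, M.head? = some b →
      ∀ v ∈ M, G.Adj a v → v ≤ b) :
    NormalFrom G (L ++ M) := by
  induction L with
  | nil => simpa
  | cons a L ih =>
    cases L with
    | nil =>
      cases M with
      | nil => trivial
      | cons m M' =>
        exact ⟨hlast a rfl m rfl, hM⟩
    | cons b L' =>
      refine ⟨?_, ?_⟩
      · intro v hv hadj
        rcases (by simpa using hv : v = b ∨ v ∈ L' ∨ v ∈ M) with h | h | h
        · exact le_of_eq h
        · exact hL.1 v (by simp [h]) hadj
        · exact hmid [] a b L' rfl v h hadj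
      · exact ih hL.2
          (fun pre a' b' suf heq => hmid (a :: pre) a' b' suf (by rw [heq]; rfl))
          (fun a' ha' => hlast a' (by rwa [List.getLast?_cons_cons]))

lemma Aprime (hUF : UmbrellaFree G) :
    ∀ (L : List V), L.Chain' G.Adj → NormalFrom G L →
    ∀ z, L.getLast? = some z → (∀ a, L.head? = some a → a < z → G.Adj a z) →
    ∀ p ∈ L, p < z → G.Adj p z := by
  intro L
  induction L with
  | nil => intro _ _ z hz; simp at hz
  | cons a rest ih =>
    intro hch hnf z hz hhd p hp hpz
    cases rest with
    | nil =>
      simp at hz hp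
      subst hz hp
      exact absurd hpz (lt_irrefl _)
    | cons b r =>
      rw [List.getLast?_cons_cons] at hz
      have hzmem : z ∈ b :: r := by
        have := List.getLast?_eq_getLast (l := b :: r) (by simp)
        rw [this] at hz
        exact (Option.some_inj.mp hz) ▸ List.getLast_mem _
      have hab : G.Adj a b := (List.isChain_cons_cons.mp hch).1
      have hhd' : ∀ a', (b :: r).head? = some a' → a' < z → G.Adj a' z := by
        intro a' ha' hlt
        have : a' = b := by simpa using ha'.symm
        subst this
        by_contra hnadj
        rcases lt_trichotomy a z with h | h | h
        · have haz : G.Adj a z := hhd a rfl h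
          have := hnf.1 z hzmem haz
          exact absurd (lt_of_lt_of_le hlt this) (lt_irrefl _)
        · subst h
          exact hnadj hab.symm
        · by_cases haz : G.Adj a z
          · have := hnf.1 z hzmem haz
            exact absurd (lt_of_lt_of_le hlt this) (lt_irrefl _)
          · rcases hUF a' z a hlt h hab.symm with h' | h'
            · exact hnadj h'
            · exact haz h'.symm
      rcases List.mem_cons.mp hp with h | h
      · subst h
        exact hhd p rfl hpz
      · exact ih (List.isChain_cons_cons.mp hch).2 (nf_tail hnf) z hz hhd' p h hpz

lemma mem_of_getLast?' {α : Type*} {l : List α} {a : α} (h : l.getLast? = some a) :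
    a ∈ l := by
  cases l with
  | nil => simp at h
  | cons x t =>
    rw [List.getLast?_eq_getLast (l := x :: t) (by simp)] at h
    exact (Option.some_inj.mp h) ▸ List.getLast_mem _


/-- Composition lemma: if `P₁` is a normal path of `G(i+1,j)` ending at `u_x` and `P₂` is a
normal path of `G(i+1,x-1)` ending at `u_y`, with `uᵢ ∈ V(G(i,j))` and `u_x ∈ N(uᵢ)`, then
`(P₁, uᵢ, P₂)` is a normal path of `G(i,j)` ending at `u_y`; in particular `P₁` and `P₂`
are vertex-disjoint and every vertex of `P₂` is adjacent to `uᵢ`. -/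
theorem normal_path_compose {n : ℕ} (G : SimpleGraph (Fin (n + 1)))
    (hdummy : ∀ w, ¬ G.Adj (Fin.last n) w)
    (hUF : UmbrellaFree G) (hLDFS : LDFSOrdering G)
    (i j : ℕ) (hi : i < n) (hj : j < n)
    (ux uy : Fin (n + 1))
    (hui : (⟨i, by omega⟩ : Fin (n + 1)) ∈ Gset G i j)
    (hux : ux ∈ Gset G (i + 1) j)
    (huy : uy ∈ Gset G (i + 1) ((ux : ℕ) - 1))
    (hadj : G.Adj (⟨i, by omega⟩ : Fin (n + 1)) ux)
    (P₁ P₂ : List (Fin (n + 1)))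
    (hP₁ : NormalPathIn G (Gset G (i + 1) j) P₁)
    (hP₁x : P₁.getLast? = some ux)
    (hP₂ : NormalPathIn G (Gset G (i + 1) ((ux : ℕ) - 1)) P₂)
    (hP₂y : P₂.getLast? = some uy) :
    NormalPathIn G (Gset G i j) (P₁ ++ (⟨i, by omega⟩ : Fin (n + 1)) :: P₂) ∧
    (P₁ ++ (⟨i, by omega⟩ : Fin (n + 1)) :: P₂).getLast? = some uy ∧
    (∀ v ∈ P₁, v ∉ P₂) ∧
    (∀ v ∈ P₂, G.Adj (⟨i, by omega⟩ : Fin (n + 1)) v) := by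
  set ui : Fin (n + 1) := ⟨i, by omega⟩ with hui_def
  have hival : (ui : ℕ) = i := rfl
  obtain ⟨m₁, ⟨nd₁, ch₁⟩, hd₁, nf₁⟩ := hP₁
  obtain ⟨m₂, ⟨nd₂, ch₂⟩, hd₂, nf₂⟩ := hP₂
  obtain ⟨hux1, hux2, hux3⟩ := hux
  have hP₁ne : P₁ ≠ [] := by intro h; rw [h] at hP₁x; simp at hP₁x
  have hP₂ne : P₂ ≠ [] := by intro h; rw [h] at hP₂y; simp at hP₂y
  have huxmem : ux ∈ P₁ := mem_of_getLast?' hP₁x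
  have huymem : uy ∈ P₂ := mem_of_getLast?' hP₂y
  obtain ⟨hy1, hy2, _⟩ := m₂ uy huymem
  have hx2 : 2 ≤ (ux : ℕ) := by omega
  -- every vertex of P₂ is non-adjacent to ux and lies strictly between i and ux
  have hP₂nadj : ∀ v ∈ P₂, ¬ G.Adj v ux := by
    intro v hv
    obtain ⟨h1, h2, h3⟩ := m₂ v hv
    exact h3 ux (by omega)
  have hP₂bd : ∀ v ∈ P₂, i + 1 ≤ (v : ℕ) ∧ (v : ℕ) < (ux : ℕ) := by
    intro v hv
    obtain ⟨h1, h2, _⟩ := m₂ v hv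
    exact ⟨h1, by omega⟩
  -- A' for P₁
  have hA : ∀ p ∈ P₁, p < ux → G.Adj p ux := by
    refine Aprime hUF P₁ ch₁ nf₁ ux hP₁x ?_
    intro a ha hlt
    have hae : a = P₁.head hP₁ne := by
      rw [List.head?_eq_head hP₁ne] at ha
      exact Option.some_inj.mp ha.symm
    have : ux ≤ a := by rw [hae]; exact hd₁ hP₁ne ux huxmem
    exact absurd hlt (not_lt.mpr this)
  -- disjointness
  have hdisj : ∀ v ∈ P₂, v ∉ P₁ := by
    intro v hv hvP₁
    have hb := hP₂bd v hv
    exact hP₂nadj v hv (hA v hvP₁ (Fin.lt_def.mpr hb.2))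
  -- every vertex of P₂ is adjacent to ui
  have hadj₂ : ∀ v ∈ P₂, G.Adj ui v := by
    intro v hv
    have hb := hP₂bd v hv
    have h1 : ui < v := Fin.lt_def.mpr (by rw [hival]; omega)
    have h2 : v < ux := Fin.lt_def.mpr hb.2
    rcases hUF ui v ux h1 h2 hadj with h | h
    · exact h
    · exact absurd h (hP₂nadj v hv)
  -- P₂ vertices lie in Gset i j
  have hmem₂ : ∀ v ∈ P₂, v ∈ Gset G i j := by
    intro v hv
    obtain ⟨h1, h2, _⟩ := m₂ v hv
    refine ⟨by omega, by omega, ?_⟩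
    intro w hw hvw
    have hvx : v < ux := Fin.lt_def.mpr (by omega)
    have hxw : ux < w := Fin.lt_def.mpr (by omega)
    rcases hUF v ux w hvx hxw hvw with h | h
    · exact hP₂nadj v hv h
    · exact hux3 w hw h
  have huinP₁ : ui ∉ P₁ := by
    intro h
    have := (m₁ ui h).1
    rw [hival] at this
    omega
  have huinP₂ : ui ∉ P₂ := by
    intro h
    have := (m₂ ui h).1
    rw [hival] at this
    omega
  -- chain for ui :: P₂
  have chM : (ui :: P₂).Chain' G.Adj := by
    refine List.isChain_cons.mpr ⟨?_, ch₂⟩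
    intro y hy
    have : y ∈ P₂ := by
      rw [List.head?_eq_head hP₂ne] at hy
      exact (Option.some_inj.mp hy) ▸ List.head_mem hP₂ne
    exact hadj₂ y this
  have ndM : (ui :: P₂).Nodup := List.nodup_cons.mpr ⟨huinP₂, nd₂⟩
  have nfM : NormalFrom G (ui :: P₂) := by
    cases hP : P₂ with
    | nil => trivial
    | cons p t =>
      subst hP
      refine ⟨?_, nf₂⟩
      intro v hv _
      exact hd₂ hP₂ne v hv
  -- total normal-from
  have nfP : NormalFrom G (P₁ ++ ui :: P₂) := by
    refine nf_append P₁ (ui :: P₂) nf₁ nfM ?_ ?_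
    · intro pre a b suf heq v hv hadj'
      have hbP₁ : b ∈ P₁ := by rw [heq]; simp
      have haP₁ : a ∈ P₁ := by rw [heq]; simp
      rcases List.mem_cons.mp hv with rfl | hv₂
      · have := (m₁ b hbP₁).1
        exact Fin.le_def.mpr (by rw [hival]; omega)
      · by_contra hbv
        push_neg at hbv
        have hb := hP₂bd v hv₂
        have hvux : v < ux := Fin.lt_def.mpr hb.2
        have huxsuf : ux ∈ b :: suf := by
          rw [heq, List.getLast?_append, List.getLast?_cons_cons] at hP₁x
          refine mem_of_getLast?' (l := b :: suf) ?_
          rw [List.getLast?_eq_getLast (l := b :: suf) (by simp)] at hP₁x ⊢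
          simpa using hP₁x
        have hnf' : NormalFrom G (pre ++ a :: b :: suf) := by rw [← heq]; exact nf₁
        have hnorm : ∀ w ∈ b :: suf, G.Adj a w → w ≤ b := (nf_suffix pre hnf').1
        have haux : ¬ G.Adj a ux := by
          intro h
          have := hnorm ux huxsuf h
          exact absurd (lt_of_lt_of_le (lt_trans hbv hvux) this) (lt_irrefl _)
        rcases lt_trichotomy a ux with h | h | h
        · exact haux (hA a haP₁ h)
        · exact hP₂nadj v hv₂ (h ▸ hadj').symm
        · rcases hUF v ux a hvux h hadj'.symm with h' | h'
          · exact hP₂nadj v hv₂ h'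
          · exact haux h'.symm
    · intro a ha b hb v hv hadj'
      have ha' : a = ux := by rw [hP₁x] at ha; exact Option.some_inj.mp ha.symm
      have hb' : b = ui := by simpa using hb.symm
      subst ha' hb'
      rcases List.mem_cons.mp hv with rfl | hv₂
      · exact le_refl _
      · exact absurd hadj'.symm (hP₂nadj v hv₂)
  have hPne : P₁ ++ ui :: P₂ ≠ [] := by simp
  have hheadeq : ∀ h, (P₁ ++ ui :: P₂).head h = P₁.head hP₁ne := by
    cases P₁ with
    | nil => exact absurd rfl hP₁ne
    | cons a t => intro h; rfl
  have hhead_ux : (ux : ℕ) ≤ ((P₁.head hP₁ne : Fin (n + 1)) : ℕ) :=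
    Fin.le_def.mp (hd₁ hP₁ne ux huxmem)
  refine ⟨⟨?_, ⟨?_, ?_⟩, ?_, nfP⟩, ?_, ?_, hadj₂⟩
  · -- membership in Gset i j
    intro v hv
    rcases List.mem_append.mp hv with h | h
    · obtain ⟨h1, h2, h3⟩ := m₁ v h
      exact ⟨by omega, h2, h3⟩
    · rcases List.mem_cons.mp h with rfl | h
      · exact hui
      · exact hmem₂ v h
  · -- nodup
    refine List.nodup_append'.mpr ⟨nd₁, ndM, ?_⟩
    intro a haP₁ haM
    rcases List.mem_cons.mp haM with rfl | h
    · exact huinP₁ haP₁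
    · exact hdisj a h haP₁
  · -- chain
    refine List.isChain_append.mpr ⟨ch₁, chM, ?_⟩
    intro x hx y hy
    have hx' : x = ux := by rw [hP₁x] at hx; exact Option.some_inj.mp hx.symm
    have hy' : y = ui := by simpa using hy.symm
    subst hx' hy'
    exact hadj.symm
  · -- head is max
    intro h v hv
    rw [hheadeq h]
    rcases List.mem_append.mp hv with hm | hm
    · exact hd₁ hP₁ne v hm
    · rcases List.mem_cons.mp hm with rfl | hm
      · exact Fin.le_def.mpr (by rw [hival]; omega)
      · have hb := hP₂bd v hm
        exact Fin.le_def.mpr (by omega)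
  · -- getLast?
    rw [List.getLast?_append]
    cases hP : P₂ with
    | nil => exact absurd hP hP₂ne
    | cons p t =>
      rw [List.getLast?_cons_cons, ← hP, hP₂y]
      rfl
  · -- disjoint stated the other way
    intro v hv₁ hv₂
    exact hdisj v hv₂ hv₁
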